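/- Let α > 2 and δ > 0 be real numbers, define u(x) = (α/2)·(x/δ) - (1 + x/δ)·ln(1 + x/δ), and let x* > 0 be the unique positive zero of u. Then the function f(x) = x^{-2/α} · ln(1 + x/δ) is strictly increasing on (0, x*] and strictly decreasing on [x*, ∞); in particular f attains its unique global maximum on (0, ∞) at x = x*. -/

import Mathlib

open Real Set

private lemma stmt5_upos (α δ : ℝ) (hα : 2 < α) (hδ : 0 < δ) {x : ℝ} (hx : 0 < x)
    (hlt : x < δ * (α / 2 - 1)) :
    0 < (α / 2) * (x / δ) - (1 + x / δ) * Real.log (1 + x / δ) := by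
  set t := x / δ with ht
  have ht0 : 0 < t := by positivity
  have hlog : Real.log (1 + t) < t := by
    have := Real.log_lt_sub_one_of_pos (x := 1 + t) (by linarith) (by linarith)
    linarith
  have hlogpos : 0 < Real.log (1 + t) := Real.log_pos (by linarith)
  have htle : t < α / 2 - 1 := by
    rw [ht]; rw [div_lt_iff₀ hδ]; linarith [hlt]
  nlinarith [mul_pos ht0 hlogpos]

private lemma stmt5_uneg (α δ : ℝ) (hα : 2 < α) (hδ : 0 < δ) {x : ℝ}
    (hle : δ * (Real.exp α - 1) ≤ x) :
    (α / 2) * (x / δ) - (1 + x / δ) * Real.log (1 + x / δ) < 0 := by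
  set t := x / δ with ht
  have hexp : Real.exp α - 1 ≤ t := by
    rw [ht, le_div_iff₀ hδ]; linarith [hle]
  have h1 : Real.exp α ≤ 1 + t := by linarith
  have ht0 : 0 < t := by
    have := Real.exp_pos α
    nlinarith [Real.add_one_le_exp α]
  have hlog : α ≤ Real.log (1 + t) := by
    rw [← Real.log_exp α]
    exact Real.log_le_log (Real.exp_pos α) h1
  have hα0 : (0:ℝ) < α := by linarith
  have h2 : (1 + t) * α ≤ (1 + t) * Real.log (1 + t) :=
    mul_le_mul_of_nonneg_left hlog (by linarith)
  nlinarith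

private lemma stmt5_contU (α δ : ℝ) (hδ : 0 < δ) {a b : ℝ} (ha : 0 < a) :
    ContinuousOn (fun x : ℝ => (α / 2) * (x / δ) - (1 + x / δ) * Real.log (1 + x / δ))
      (Set.Icc a b) := by
  have h : ContinuousOn (fun x : ℝ => 1 + x / δ) (Set.Icc a b) :=
    (continuous_const.add (continuous_id.div_const δ)).continuousOn
  have hlog : ContinuousOn (fun x : ℝ => Real.log (1 + x / δ)) (Set.Icc a b) :=
    h.log (fun x hx => by
      have : 0 < 1 + x / δ := by
        have : 0 < x := lt_of_lt_of_le ha hx.1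
        positivity
      exact this.ne')
  exact ((continuous_const.mul (continuous_id.div_const δ)).continuousOn).sub (h.mul hlog)

private lemma stmt5_hasDeriv (α δ : ℝ) (hα : 2 < α) (hδ : 0 < δ) {x : ℝ} (hx : 0 < x) :
    HasDerivAt (fun x : ℝ => x ^ (-(2 / α)) * Real.log (1 + x / δ))
      (x ^ (-(2 / α) - 1) *
        ((2 / α) * ((α / 2) * (x / δ) - (1 + x / δ) * Real.log (1 + x / δ)) / (1 + x / δ))) x := by
  have hα0 : (0:ℝ) < α := by linarith
  have h1 : 0 < 1 + x / δ := by positivity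
  have hr : HasDerivAt (fun x : ℝ => x ^ (-(2/α))) ((-(2/α)) * x ^ (-(2/α) - 1)) x :=
    Real.hasDerivAt_rpow_const (Or.inl hx.ne')
  have hinner : HasDerivAt (fun x : ℝ => 1 + x / δ) (1 / δ) x := by
    simpa using ((hasDerivAt_id x).div_const δ).const_add 1
  have hl : HasDerivAt (fun x : ℝ => Real.log (1 + x / δ)) ((1 + x / δ)⁻¹ * (1 / δ)) x := by
    exact (Real.hasDerivAt_log h1.ne').comp x hinner
  have hmul := hr.mul hl
  refine hmul.congr_deriv ?_
  have hxpow : x ^ (-(2/α)) = x ^ (-(2/α) - 1) * x := by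
    rw [← Real.rpow_add_one hx.ne']; ring_nf
  rw [hxpow]
  field_simp
  ring

/-- With `u` as in Proposition 2 and `x*` its unique positive zero,
`f(x) = x^{-2/α} ln(1 + x/δ)` is strictly increasing on `(0, x*]`, strictly
decreasing on `[x*, ∞)`, and attains its unique global maximum on `(0, ∞)` at `x*`. -/
theorem stmt_5 (α δ xs : ℝ) (hα : 2 < α) (hδ : 0 < δ) (hxs : 0 < xs)
    (hzero : (α / 2) * (xs / δ) - (1 + xs / δ) * Real.log (1 + xs / δ) = 0)
    (huniq : ∀ x : ℝ, 0 < x →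
      (α / 2) * (x / δ) - (1 + x / δ) * Real.log (1 + x / δ) = 0 → x = xs) :
    StrictMonoOn (fun x : ℝ => x ^ (-(2 / α)) * Real.log (1 + x / δ)) (Set.Ioc 0 xs) ∧
    StrictAntiOn (fun x : ℝ => x ^ (-(2 / α)) * Real.log (1 + x / δ)) (Set.Ici xs) ∧
    ∀ x : ℝ, 0 < x → x ≠ xs →
      x ^ (-(2 / α)) * Real.log (1 + x / δ)
        < xs ^ (-(2 / α)) * Real.log (1 + xs / δ) := by
  set U : ℝ → ℝ := fun x => (α / 2) * (x / δ) - (1 + x / δ) * Real.log (1 + x / δ) with hU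
  have hα0 : (0:ℝ) < α := by linarith
  -- U > 0 on (0, xs)
  have key_pos : ∀ x : ℝ, 0 < x → x < xs → 0 < U x := by
    intro x hx hxlt
    rcases lt_trichotomy (U x) 0 with h | h | h
    · exfalso
      set a := min x (δ * (α / 2 - 1)) / 2 with hadef
      have hda : 0 < δ * (α / 2 - 1) := by nlinarith
      have ha0 : 0 < a := by positivity
      have hax : a < x := by
        have h1 := min_le_left x (δ * (α / 2 - 1))
        simp only [hadef]; linarith
      have haδ : a < δ * (α / 2 - 1) := by
        have := min_le_right x (δ * (α / 2 - 1))
        simp only [hadef]; linarith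
      have hUa : 0 < U a := stmt5_upos α δ hα hδ ha0 haδ
      have hcont : ContinuousOn U (Set.Icc a x) := stmt5_contU α δ hδ ha0
      have hsub := intermediate_value_Ioo' hax.le hcont
      have : (0:ℝ) ∈ Set.Ioo (U x) (U a) := ⟨h, hUa⟩
      obtain ⟨c, hc, hc0⟩ := hsub this
      have hceq := huniq c (lt_trans ha0 hc.1) hc0
      linarith [hc.2, hceq ▸ hc.2]
    · exact absurd (huniq x hx h) (ne_of_lt hxlt)
    · exact h
  -- U < 0 on (xs, ∞)
  have key_neg : ∀ x : ℝ, xs < x → U x < 0 := by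
    intro x hxgt
    have hx : 0 < x := lt_trans hxs hxgt
    rcases lt_trichotomy (U x) 0 with h | h | h
    · exact h
    · exact absurd (huniq x hx h) (by intro he; rw [he] at hxgt; exact lt_irrefl _ hxgt)
    · exfalso
      set b := max x (δ * (Real.exp α - 1)) + 1 with hbdef
      have hxb : x < b := by
        have := le_max_left x (δ * (Real.exp α - 1))
        simp only [hbdef]; linarith
      have hbδ : δ * (Real.exp α - 1) ≤ b := by
        have := le_max_right x (δ * (Real.exp α - 1))
        simp only [hbdef]; linarith
      have hUb : U b < 0 := stmt5_uneg α δ hα hδ hbδ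
      have hcont : ContinuousOn U (Set.Icc x b) := stmt5_contU α δ hδ hx
      have hsub := intermediate_value_Ioo' hxb.le hcont
      have : (0:ℝ) ∈ Set.Ioo (U b) (U x) := ⟨hUb, h⟩
      obtain ⟨c, hc, hc0⟩ := hsub this
      have hceq := huniq c (lt_trans hx hc.1) hc0
      have : xs < c := lt_trans hxgt hc.1
      rw [hceq] at this; exact lt_irrefl _ this
  set f : ℝ → ℝ := fun x : ℝ => x ^ (-(2 / α)) * Real.log (1 + x / δ) with hf
  have hderiv : ∀ x : ℝ, 0 < x →
      HasDerivAt f (x ^ (-(2 / α) - 1) * ((2 / α) * U x / (1 + x / δ))) x :=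
    fun x hx => stmt5_hasDeriv α δ hα hδ hx
  have hmono : StrictMonoOn f (Set.Ioc 0 xs) := by
    apply strictMonoOn_of_deriv_pos (convex_Ioc 0 xs)
    · intro x hx
      exact (hderiv x hx.1).continuousAt.continuousWithinAt
    · intro x hx
      rw [interior_Ioc] at hx
      rw [(hderiv x hx.1).deriv]
      have hx0 : 0 < x := hx.1
      have h1 : 0 < 1 + x / δ := by positivity
      have hUx := key_pos x hx.1 hx.2
      have hp : (0:ℝ) < x ^ (-(2 / α) - 1) := Real.rpow_pos_of_pos hx.1 _
      exact mul_pos hp (div_pos (mul_pos (by positivity) hUx) h1)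
  have hanti : StrictAntiOn f (Set.Ici xs) := by
    apply strictAntiOn_of_deriv_neg (convex_Ici xs)
    · intro x hx
      exact (hderiv x (lt_of_lt_of_le hxs hx)).continuousAt.continuousWithinAt
    · intro x hx
      rw [interior_Ici] at hx
      have hx0 : 0 < x := lt_trans hxs hx
      rw [(hderiv x hx0).deriv]
      have h1 : 0 < 1 + x / δ := by positivity
      have hU := key_neg x hx
      have hp : (0:ℝ) < x ^ (-(2 / α) - 1) := Real.rpow_pos_of_pos hx0 _
      have : (2 / α) * U x / (1 + x / δ) < 0 := by
        apply div_neg_of_neg_of_pos _ h1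
        exact mul_neg_of_pos_of_neg (by positivity) hU
      exact mul_neg_of_pos_of_neg hp this
  refine ⟨hmono, hanti, ?_⟩
  intro x hx hne
  rcases lt_or_gt_of_ne hne with h | h
  · exact hmono ⟨hx, h.le⟩ ⟨hxs, le_refl xs⟩ h
  · exact hanti (le_refl xs) h.le h
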